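/- Let d ≥ 1, M > 0, and let π^y be the Gaussian density π^y(x) = (2πM²)^{−d/2} exp(−‖x‖²/(2M²)) on ℝ^d. Then for every m ∈ ℝ^d with ‖m‖ ≤ M, π^y is an Ly(R, Q, A)-density with center m, where R² = 3M²(2d+1), Q = 2M²·(1 + (9/2)(2d+1)·exp(12d+8)), and A = (1/V_d)·(2π/(3(2d+1)))^{d/2}·exp(6d+4), V_d being the volume of the d-dimensional unit ball. -/

import Mathlib

open MeasureTheory RealInnerProductSpace

noncomputable section

abbrev Euc (d : ℕ) := EuclideanSpace ℝ (Fin d)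

def IsDensity {d : ℕ} (ρ : Euc d → ℝ) : Prop :=
  (∀ x, 0 ≤ ρ x) ∧ ∫ x, ρ x = 1

def lap {d : ℕ} (f : Euc d → ℝ) (x : Euc d) : ℝ :=
  ∑ i : Fin d, fderiv ℝ (fun y => fderiv ℝ f y (EuclideanSpace.single i 1)) x (EuclideanSpace.single i 1)

def LGen {d : ℕ} (ν V : Euc d → ℝ) (x : Euc d) : ℝ :=
  ⟪gradient V x, gradient (fun y => Real.log (ν y)) x⟫ + lap V x

structure IsLyapunov {d : ℕ} (ν V : Euc d → ℝ) (lam h : ℝ) (B : Set (Euc d)) (C : ℝ) : Prop where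
  contDiff : ContDiff ℝ 2 V
  one_le : ∀ x, 1 ≤ V x
  lam_pos : 0 < lam
  h_pos : 0 < h
  C_pos : 0 < C
  bounded : Bornology.IsBounded B
  drift : ∀ x, LGen ν V x ≤ -lam * V x + h * B.indicator 1 x
  ratio : ∀ x ∈ B, ∀ y ∈ B, ν x ≤ C * ν y

def uball {d : ℕ} (x₀ : Euc d) (R : ℝ) (x : Euc d) : ℝ :=
  (Metric.closedBall x₀ R).indicator (fun _ => ((volume (Metric.closedBall x₀ R)).toReal)⁻¹) x

def IsLyDensity {d : ℕ} (ν : Euc d → ℝ) (x₀ : Euc d) (R q a : ℝ) : Prop :=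
  ∃ V lam h C, IsLyapunov ν V lam h (Metric.closedBall x₀ R) C ∧
    (1 + h * R ^ 2 * C ^ 2) / lam ≤ q ∧
    ∀ x ∈ Metric.closedBall x₀ R, uball x₀ R x ≤ a * ν x

def Vball (d : ℕ) : ℝ := (volume (Metric.closedBall (0 : Euc d) 1)).toReal

def IsLogConcave {d : ℕ} (ν : Euc d → ℝ) (c L : ℝ) : Prop :=
  ContDiff ℝ 2 (fun x => -Real.log (ν x)) ∧
  (∀ x y : Euc d, c * ‖x - y‖ ^ 2 ≤
      ⟪gradient (fun z => -Real.log (ν z)) x - gradient (fun z => -Real.log (ν z)) y, x - y⟫) ∧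
  (∀ x : Euc d, ‖fderiv ℝ (fun z => gradient (fun w => -Real.log (ν w)) z) x‖ ≤ L)

def GammaR {d : ℕ} (π πy : Euc d → ℝ) (τ ρ : ℝ) (f : Euc d × Euc d → ℝ) (x y : Euc d) : ℝ :=
  ‖gradient (fun x' => f (x', y)) x‖ ^ 2 + τ * ‖gradient (fun y' => f (x, y')) y‖ ^ 2 +
    (ρ / 2) * min 1 (π y * πy x / (π x * πy y)) * (f (y, x) - f (x, y)) ^ 2


set_option maxHeartbeats 1000000

lemma expsq_hasFDerivAt {d : ℕ} (c : ℝ) (x : Euc d) :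
    HasFDerivAt (fun y : Euc d => Real.exp (c * ‖y‖ ^ 2))
      ((2 * c * Real.exp (c * ‖x‖ ^ 2)) • (innerSL ℝ x)) x := by
  have h1 : HasFDerivAt (fun y : Euc d => ‖y‖ ^ 2) (2 • (innerSL ℝ x)) x := by
    simpa using (hasFDerivAt_id x).norm_sq
  have h2 := h1.const_mul c
  have h3 := (Real.hasDerivAt_exp (c * ‖x‖ ^ 2)).comp_hasFDerivAt x h2
  refine h3.congr_fderiv ?_
  ext y
  simp
  ring

lemma expsq_hasGradientAt {d : ℕ} (c : ℝ) (x : Euc d) :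
    HasGradientAt (fun y : Euc d => Real.exp (c * ‖y‖ ^ 2))
      ((2 * c * Real.exp (c * ‖x‖ ^ 2)) • x) x := by
  rw [hasGradientAt_iff_hasFDerivAt]
  refine (expsq_hasFDerivAt c x).congr_fderiv ?_
  ext y
  simp [real_inner_smul_left]

lemma const_add_mul_normsq_hasGradientAt {d : ℕ} (k c : ℝ) (x : Euc d) :
    HasGradientAt (fun y : Euc d => k + c * ‖y‖ ^ 2) ((2 * c) • x) x := by
  rw [hasGradientAt_iff_hasFDerivAt]
  have h1 : HasFDerivAt (fun y : Euc d => ‖y‖ ^ 2) (2 • (innerSL ℝ x)) x := by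
    simpa using (hasFDerivAt_id x).norm_sq
  have h2 := (h1.const_mul c).const_add k
  refine h2.congr_fderiv ?_
  ext y
  simp [real_inner_smul_left]
  ring

lemma sum_sq_eq_normsq {d : ℕ} (x : Euc d) : ∑ i : Fin d, (x i) ^ 2 = ‖x‖ ^ 2 := by
  rw [← real_inner_self_eq_norm_sq]
  simp [PiLp.inner_apply, sq]
  rw [← sq, EuclideanSpace.real_norm_sq_eq]
  simp [sq]

lemma lap_expsq {d : ℕ} (c : ℝ) (x : Euc d) :
    lap (fun y : Euc d => Real.exp (c * ‖y‖ ^ 2)) x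
      = Real.exp (c * ‖x‖ ^ 2) * (2 * c * d + 4 * c ^ 2 * ‖x‖ ^ 2) := by
  have key : ∀ i : Fin d,
      fderiv ℝ (fun y => fderiv ℝ (fun y : Euc d => Real.exp (c * ‖y‖ ^ 2)) y
        (EuclideanSpace.single i 1)) x (EuclideanSpace.single i 1)
      = 2 * c * Real.exp (c * ‖x‖ ^ 2) + 4 * c ^ 2 * Real.exp (c * ‖x‖ ^ 2) * (x i) ^ 2 := by
    intro i
    have hfun : (fun y => fderiv ℝ (fun y : Euc d => Real.exp (c * ‖y‖ ^ 2)) y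
        (EuclideanSpace.single i 1)) = fun y : Euc d => (2 * c * Real.exp (c * ‖y‖ ^ 2)) * y i := by
      funext y
      rw [(expsq_hasFDerivAt c y).fderiv]
      simp [EuclideanSpace.inner_single_right]
    rw [hfun]
    have h1 : HasFDerivAt (fun y : Euc d => 2 * c * Real.exp (c * ‖y‖ ^ 2))
        ((2 * c) • ((2 * c * Real.exp (c * ‖x‖ ^ 2)) • (innerSL ℝ x))) x :=
      (expsq_hasFDerivAt c x).const_mul (2 * c)
    have h2 : HasFDerivAt (fun y : Euc d => y i) (EuclideanSpace.proj i : Euc d →L[ℝ] ℝ) x :=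
      (EuclideanSpace.proj (𝕜 := ℝ) i).hasFDerivAt
    have h3 := h1.mul h2
    rw [HasFDerivAt.fderiv (f := fun y : Euc d => 2 * c * Real.exp (c * ‖y‖ ^ 2) * y i) h3]
    simp [EuclideanSpace.inner_single_right]
    ring
  unfold lap
  rw [Finset.sum_congr rfl (fun i _ => key i), Finset.sum_add_distrib, Finset.sum_const,
    ← Finset.mul_sum, sum_sq_eq_normsq]
  simp [Finset.card_univ]
  ring

lemma gaussian_LGen {d : ℕ} (M : ℝ) (hM : 0 < M) (πy : Euc d → ℝ)
    (hπy : ∀ x, πy x = (2 * Real.pi * M ^ 2) ^ (-(d : ℝ) / 2) *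
        Real.exp (-‖x‖ ^ 2 / (2 * M ^ 2))) (x : Euc d) :
    LGen πy (fun y : Euc d => Real.exp ((4 * M ^ 2)⁻¹ * ‖y‖ ^ 2)) x
      = Real.exp ((4 * M ^ 2)⁻¹ * ‖x‖ ^ 2) *
        ((d : ℝ) / (2 * M ^ 2) - ‖x‖ ^ 2 / (4 * M ^ 2 * M ^ 2)) := by
  have hK : (0:ℝ) < (2 * Real.pi * M ^ 2) ^ (-(d : ℝ) / 2) :=
    Real.rpow_pos_of_pos (by positivity) _
  have hlog : (fun y => Real.log (πy y))
      = fun y : Euc d => Real.log ((2 * Real.pi * M ^ 2) ^ (-(d : ℝ) / 2))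
        + (-(2 * M ^ 2)⁻¹) * ‖y‖ ^ 2 := by
    funext y
    rw [hπy y, Real.log_mul (ne_of_gt hK) (Real.exp_ne_zero _), Real.log_exp]
    field_simp
  unfold LGen
  rw [hlog, (expsq_hasGradientAt ((4 * M ^ 2)⁻¹) x).gradient,
    (const_add_mul_normsq_hasGradientAt _ (-(2 * M ^ 2)⁻¹) x).gradient,
    lap_expsq]
  rw [real_inner_smul_left, real_inner_smul_right, real_inner_self_eq_norm_sq]
  field_simp
  ring

/-- the Gaussian density `π^y(x) = (2πM²)^{−d/2} exp(−‖x‖²/(2M²))`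
is an `Ly(R,Q,A)`-density with center `m` for every `‖m‖ ≤ M`, with explicit
constants `R² = 3M²(2d+1)`, `Q = 2M²(1 + (9/2)(2d+1)e^{12d+8})`,
`A = (1/V_d)(2π/(3(2d+1)))^{d/2} e^{6d+4}`. -/
theorem gaussian_is_ly_density
    (d : ℕ) (hd : 1 ≤ d) (M : ℝ) (hM : 0 < M)
    (πy : Euc d → ℝ)
    (hπy : ∀ x, πy x = (2 * Real.pi * M ^ 2) ^ (-(d : ℝ) / 2) *
        Real.exp (-‖x‖ ^ 2 / (2 * M ^ 2)))
    (m : Euc d) (hm : ‖m‖ ≤ M) :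
    IsLyDensity πy m (Real.sqrt (3 * M ^ 2 * (2 * d + 1)))
      (2 * M ^ 2 * (1 + (9 / 2) * (2 * (d : ℝ) + 1) * Real.exp (12 * d + 8)))
      ((Vball d)⁻¹ * (2 * Real.pi / (3 * (2 * (d : ℝ) + 1))) ^ ((d : ℝ) / 2) *
        Real.exp (6 * d + 4)) := by
  have hd1 : (1:ℝ) ≤ (d:ℝ) := by exact_mod_cast hd
  have hM2 : (0:ℝ) < M ^ 2 := by positivity
  set t : ℝ := Real.sqrt (6 * (d:ℝ) + 3) with htdef
  have ht0 : 0 ≤ t := Real.sqrt_nonneg _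
  have ht2 : t ^ 2 = 6 * (d:ℝ) + 3 := Real.sq_sqrt (by positivity)
  have ht3 : 3 ≤ t := by
    have h9 : Real.sqrt (3 ^ 2) ≤ t := Real.sqrt_le_sqrt (by nlinarith)
    rwa [Real.sqrt_sq (by norm_num)] at h9
  have htd : t ≤ (d:ℝ) + 2 := by
    have h9 : t ≤ Real.sqrt (((d:ℝ) + 2) ^ 2) := Real.sqrt_le_sqrt (by nlinarith)
    rwa [Real.sqrt_sq (by positivity)] at h9
  have ht2d : t ≤ 2 * (d:ℝ) + 1 := by
    have h9 : t ≤ Real.sqrt ((2 * (d:ℝ) + 1) ^ 2) := Real.sqrt_le_sqrt (by nlinarith)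
    rwa [Real.sqrt_sq (by positivity)] at h9
  set R : ℝ := Real.sqrt (3 * M ^ 2 * (2 * (d:ℝ) + 1)) with hRdef
  have hR : R = M * t := by
    rw [hRdef, htdef, show 3 * M ^ 2 * (2 * (d:ℝ) + 1) = M ^ 2 * (6 * (d:ℝ) + 3) by ring,
      Real.sqrt_mul (sq_nonneg M), Real.sqrt_sq hM.le]
  have hR2 : R ^ 2 = 3 * M ^ 2 * (2 * (d:ℝ) + 1) := Real.sq_sqrt (by positivity)
  have hRpos : 0 < R := by rw [hR]; positivity
  set V : Euc d → ℝ := fun y : Euc d => Real.exp ((4 * M ^ 2)⁻¹ * ‖y‖ ^ 2) with hVdef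
  set lam : ℝ := (2 * M ^ 2)⁻¹ with hlamdef
  set h : ℝ := (((d:ℝ) + 1) / (2 * M ^ 2)) * Real.exp ((t + 1) ^ 2 / 4) with hhdef
  set C : ℝ := Real.exp ((t + 1) ^ 2 / 2) with hCdef
  have hK : (0:ℝ) < (2 * Real.pi * M ^ 2) ^ (-(d : ℝ) / 2) :=
    Real.rpow_pos_of_pos (by positivity) _
  have hVpos : ∀ x, 0 < V x := fun x => Real.exp_pos _
  -- norm bound inside the ball
  have hnorm_mem : ∀ x ∈ Metric.closedBall m R, ‖x‖ ^ 2 ≤ M ^ 2 * (t + 1) ^ 2 := by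
    intro x hx
    rw [Metric.mem_closedBall, dist_eq_norm] at hx
    have h1 : ‖x‖ ≤ M * (t + 1) := by
      have := norm_sub_norm_le x m
      nlinarith [hR]
    have h2 : (0:ℝ) ≤ ‖x‖ := norm_nonneg _
    nlinarith
  refine ⟨V, lam, h, C, ⟨?_, ?_, ?_, ?_, ?_, Metric.isBounded_closedBall, ?_, ?_⟩, ?_, ?_⟩
  · exact (Real.contDiff_exp.comp (contDiff_const.mul (contDiff_id.norm_sq ℝ))).of_le le_top
  · intro x; exact Real.one_le_exp (by positivity)
  · positivity
  · positivity
  · positivity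
  · -- drift
    intro x
    rw [gaussian_LGen M hM πy hπy x]
    by_cases hx : x ∈ Metric.closedBall m R
    · rw [Set.indicator_of_mem hx, Pi.one_apply, mul_one]
      have hb := hnorm_mem x hx
      have hVxle : V x ≤ Real.exp ((t + 1) ^ 2 / 4) := by
        apply Real.exp_le_exp.mpr
        rw [inv_mul_le_iff₀ (by positivity)]
        nlinarith
      have key : Real.exp ((4 * M ^ 2)⁻¹ * ‖x‖ ^ 2) *
            ((d:ℝ) / (2 * M ^ 2) - ‖x‖ ^ 2 / (4 * M ^ 2 * M ^ 2)) + lam * V x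
          ≤ V x * (((d:ℝ) + 1) / (2 * M ^ 2)) := by
        have e1 : Real.exp ((4 * M ^ 2)⁻¹ * ‖x‖ ^ 2) *
            ((d:ℝ) / (2 * M ^ 2) - ‖x‖ ^ 2 / (4 * M ^ 2 * M ^ 2)) + lam * V x
            = V x * (((d:ℝ) + 1) / (2 * M ^ 2)) - V x * (‖x‖ ^ 2 / (4 * M ^ 2 * M ^ 2)) := by
          rw [hVdef, hlamdef]
          field_simp
          ring
        rw [e1]
        have : 0 ≤ V x * (‖x‖ ^ 2 / (4 * M ^ 2 * M ^ 2)) := by positivity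
        linarith
      have key2 : V x * (((d:ℝ) + 1) / (2 * M ^ 2)) ≤ h := by
        rw [hhdef]
        rw [mul_comm (((d:ℝ) + 1) / (2 * M ^ 2))]
        exact mul_le_mul_of_nonneg_right hVxle (by positivity)
      linarith
    · rw [Set.indicator_of_notMem hx]
      rw [Metric.mem_closedBall, dist_eq_norm, not_le] at hx
      have h1 : M * (t - 1) ≤ ‖x‖ := by
        have := norm_sub_le x m
        nlinarith [hR]
      have hxsq : M ^ 2 * (t - 1) ^ 2 ≤ ‖x‖ ^ 2 := by
        have h0 : 0 ≤ M * (t - 1) := by nlinarith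
        nlinarith
      have hxsq2 : 2 * M ^ 2 * ((d:ℝ) + 1) ≤ ‖x‖ ^ 2 := by nlinarith
      have hcoef : (d:ℝ) / (2 * M ^ 2) - ‖x‖ ^ 2 / (4 * M ^ 2 * M ^ 2) ≤ -lam := by
        have e : (d:ℝ) / (2 * M ^ 2) - ‖x‖ ^ 2 / (4 * M ^ 2 * M ^ 2) + lam
            = (2 * M ^ 2 * ((d:ℝ) + 1) - ‖x‖ ^ 2) / (4 * M ^ 2 * M ^ 2) := by
          rw [hlamdef]; field_simp; ring
        have hnum : (2 * M ^ 2 * ((d:ℝ) + 1) - ‖x‖ ^ 2) / (4 * M ^ 2 * M ^ 2) ≤ 0 :=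
          div_nonpos_of_nonpos_of_nonneg (by linarith) (by positivity)
        linarith
      have := mul_le_mul_of_nonneg_left hcoef (hVpos x).le
      rw [mul_zero]
      calc Real.exp ((4 * M ^ 2)⁻¹ * ‖x‖ ^ 2) *
            ((d:ℝ) / (2 * M ^ 2) - ‖x‖ ^ 2 / (4 * M ^ 2 * M ^ 2))
          ≤ V x * (-lam) := this
        _ = -lam * V x + 0 := by ring
  · -- ratio
    intro x hx y hy
    rw [hπy x, hπy y]
    have hx1 : Real.exp (-‖x‖ ^ 2 / (2 * M ^ 2)) ≤ 1 := by
      apply Real.exp_le_one_iff.mpr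
      have : (0:ℝ) ≤ ‖x‖ ^ 2 := by positivity
      apply div_nonpos_of_nonpos_of_nonneg <;> [linarith; positivity]
    have hy1 : (1:ℝ) ≤ C * Real.exp (-‖y‖ ^ 2 / (2 * M ^ 2)) := by
      rw [hCdef, ← Real.exp_add]
      apply Real.one_le_exp
      have hb := hnorm_mem y hy
      rw [div_add_div _ _ (by norm_num) (by positivity)]
      apply div_nonneg _ (by positivity)
      nlinarith
    calc (2 * Real.pi * M ^ 2) ^ (-(d : ℝ) / 2) * Real.exp (-‖x‖ ^ 2 / (2 * M ^ 2))
        ≤ (2 * Real.pi * M ^ 2) ^ (-(d : ℝ) / 2) * 1 := mul_le_mul_of_nonneg_left hx1 hK.le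
      _ ≤ (2 * Real.pi * M ^ 2) ^ (-(d : ℝ) / 2) *
          (C * Real.exp (-‖y‖ ^ 2 / (2 * M ^ 2))) := mul_le_mul_of_nonneg_left hy1 hK.le
      _ = C * ((2 * Real.pi * M ^ 2) ^ (-(d : ℝ) / 2) * Real.exp (-‖y‖ ^ 2 / (2 * M ^ 2))) := by
          ring
  · -- Q bound
    have hC2 : C ^ 2 = Real.exp ((t + 1) ^ 2) := by
      rw [hCdef, sq, ← Real.exp_add]
      ring_nf
    have hhRC : h * R ^ 2 * C ^ 2
        = (3 / 2) * ((d:ℝ) + 1) * (2 * (d:ℝ) + 1) * Real.exp ((5 / 4) * (t + 1) ^ 2) := by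
      rw [hhdef, hC2, hR2, show (5 / 4) * (t + 1) ^ 2 = (t + 1) ^ 2 / 4 + (t + 1) ^ 2 by ring,
        Real.exp_add]
      field_simp
    have hE : Real.exp (12 * (d:ℝ) + 8) = Real.exp (2 * (d:ℝ) - 2) * Real.exp (10 * (d:ℝ) + 10) := by
      rw [← Real.exp_add]; ring_nf
    have h1 : (d:ℝ) + 1 ≤ 3 * Real.exp (2 * (d:ℝ) - 2) := by
      nlinarith [Real.add_one_le_exp (2 * (d:ℝ) - 2)]
    have h2 : Real.exp ((5 / 4) * (t + 1) ^ 2) ≤ Real.exp (10 * (d:ℝ) + 10) := by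
      apply Real.exp_le_exp.mpr
      nlinarith
    have hQ : h * R ^ 2 * C ^ 2 ≤ (9 / 2) * (2 * (d:ℝ) + 1) * Real.exp (12 * (d:ℝ) + 8) := by
      rw [hhRC, hE]
      calc (3 / 2) * ((d:ℝ) + 1) * (2 * (d:ℝ) + 1) * Real.exp ((5 / 4) * (t + 1) ^ 2)
          ≤ (3 / 2) * (3 * Real.exp (2 * (d:ℝ) - 2)) * (2 * (d:ℝ) + 1) *
            Real.exp (10 * (d:ℝ) + 10) := by
            apply mul_le_mul (by gcongr <;> positivity) h2 (Real.exp_pos _).le (by positivity)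
        _ = (9 / 2) * (2 * (d:ℝ) + 1) * (Real.exp (2 * (d:ℝ) - 2) * Real.exp (10 * (d:ℝ) + 10)) := by
            ring
    rw [hlamdef, div_eq_mul_inv, inv_inv]
    nlinarith [hQ]
  · -- A bound
    intro x hx
    have hvol : (volume (Metric.closedBall m R)).toReal = R ^ d * Vball d := by
      rw [Measure.addHaar_closedBall' volume m hRpos.le, ENNReal.toReal_mul,
        ENNReal.toReal_ofReal (by positivity)]
      simp [Vball]
    have hVb : 0 < Vball d := by
      apply ENNReal.toReal_pos (ne_of_gt (Metric.measure_closedBall_pos _ _ one_pos))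
        measure_closedBall_lt_top.ne
    rw [uball, Set.indicator_of_mem hx, hvol]
    have hPK : (2 * Real.pi / (3 * (2 * (d:ℝ) + 1))) ^ ((d : ℝ) / 2)
        * (2 * Real.pi * M ^ 2) ^ (-(d : ℝ) / 2) = (R ^ d)⁻¹ := by
      rw [show -(d:ℝ) / 2 = -((d:ℝ) / 2) by ring, Real.rpow_neg (by positivity),
        ← div_eq_mul_inv, ← Real.div_rpow (by positivity) (by positivity)]
      have hbase : 2 * Real.pi / (3 * (2 * (d:ℝ) + 1)) / (2 * Real.pi * M ^ 2) = (R ^ 2)⁻¹ := by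
        rw [hR2]
        have hpi : Real.pi ≠ 0 := Real.pi_ne_zero
        field_simp
      rw [hbase, Real.inv_rpow (by positivity)]
      congr 1
      rw [← Real.rpow_natCast R 2, ← Real.rpow_mul hRpos.le, ← Real.rpow_natCast R d]
      congr 1
      push_cast
      ring
    have hgoal : (Vball d)⁻¹ * (2 * Real.pi / (3 * (2 * (d:ℝ) + 1))) ^ ((d : ℝ) / 2) *
          Real.exp (6 * (d:ℝ) + 4) * πy x
        = (R ^ d * Vball d)⁻¹ *
            (Real.exp (6 * (d:ℝ) + 4) * Real.exp (-‖x‖ ^ 2 / (2 * M ^ 2))) := by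
      rw [hπy x, mul_inv,
        show (Vball d)⁻¹ * (2 * Real.pi / (3 * (2 * (d:ℝ) + 1))) ^ ((d : ℝ) / 2) *
          Real.exp (6 * (d:ℝ) + 4) * ((2 * Real.pi * M ^ 2) ^ (-(d : ℝ) / 2) *
            Real.exp (-‖x‖ ^ 2 / (2 * M ^ 2)))
        = ((2 * Real.pi / (3 * (2 * (d:ℝ) + 1))) ^ ((d : ℝ) / 2) *
            (2 * Real.pi * M ^ 2) ^ (-(d : ℝ) / 2)) * (Vball d)⁻¹ *
            (Real.exp (6 * (d:ℝ) + 4) * Real.exp (-‖x‖ ^ 2 / (2 * M ^ 2))) from by ring, hPK]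
    rw [hgoal]
    apply le_mul_of_one_le_right (by positivity)
    rw [← Real.exp_add]
    apply Real.one_le_exp
    have hb := hnorm_mem x hx
    have hle : ‖x‖ ^ 2 / (2 * M ^ 2) ≤ 6 * (d:ℝ) + 4 := by
      rw [div_le_iff₀ (by positivity)]
      nlinarith
    have he : -‖x‖ ^ 2 / (2 * M ^ 2) = -(‖x‖ ^ 2 / (2 * M ^ 2)) := by ring
    rw [he]
    linarith

end
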